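/- Let A be a real symmetric n×n matrix with strictly positive entries and at most one positive eigenvalue, and let v be a Perron–Frobenius eigenvector of A (entrywise positive eigenvector for the largest eigenvalue). Then the matrix B with entries B_{ij} = A_{ij}/(v_i v_j) is conditionally negative definite: zᵀBz ≤ 0 for all z with ∑ᵢ zᵢ = 0. -/

import Mathlib

open Finset

open Matrix in
lemma quad_form_eigen (n : ℕ) (A : Matrix (Fin n) (Fin n) ℝ) (hA : A.IsHermitian)
    (x : Fin n → ℝ) :
    x ⬝ᵥ (A *ᵥ x) = ∑ k, hA.eigenvalues k *
      ((hA.eigenvectorBasis k : Fin n → ℝ) ⬝ᵥ x)^2 := by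
  set e : Fin n → Fin n → ℝ := fun k i => hA.eigenvectorBasis k i with he
  set c : Fin n → ℝ := fun k => e k ⬝ᵥ x with hc
  have hrepr : ∀ k, hA.eigenvectorBasis.repr (WithLp.toLp 2 x : EuclideanSpace ℝ (Fin n)) k = c k := by
    intro k
    rw [hA.eigenvectorBasis.repr_apply_apply]
    simp [PiLp.inner_apply, dotProduct, hc, he, mul_comm]
  have hx : ∀ i, ∑ k, c k * e k i = x i := by
    intro i
    have h := congrArg (WithLp.linearEquiv 2 ℝ (Fin n → ℝ))
      (hA.eigenvectorBasis.sum_repr (WithLp.toLp 2 x : EuclideanSpace ℝ (Fin n)))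
    rw [map_sum] at h
    simp only [_root_.map_smul] at h
    have h2 := congrFun h i
    simpa [hrepr, he, Finset.sum_apply, WithLp.linearEquiv] using h2
  have heig : ∀ k i, ∑ j, A i j * e k j = hA.eigenvalues k * e k i := by
    intro k i
    have := congrFun (hA.mulVec_eigenvectorBasis k) i
    simpa [Matrix.mulVec, dotProduct, he] using this
  have hAx : ∀ i, (A *ᵥ x) i = ∑ k, c k * (hA.eigenvalues k * e k i) := by
    intro i
    calc (A *ᵥ x) i = ∑ j, A i j * x j := rfl
      _ = ∑ j, A i j * (∑ k, c k * e k j) := by simp only [hx]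
      _ = ∑ j, ∑ k, c k * (A i j * e k j) := by
          refine Finset.sum_congr rfl fun j _ => ?_
          rw [Finset.mul_sum]
          exact Finset.sum_congr rfl fun k _ => by ring
      _ = ∑ k, ∑ j, c k * (A i j * e k j) := Finset.sum_comm
      _ = ∑ k, c k * (hA.eigenvalues k * e k i) := by
          refine Finset.sum_congr rfl fun k _ => ?_
          rw [← Finset.mul_sum, heig]
  calc x ⬝ᵥ (A *ᵥ x) = ∑ i, x i * ∑ k, c k * (hA.eigenvalues k * e k i) := by
        simp only [dotProduct, hAx]
    _ = ∑ i, ∑ k, (hA.eigenvalues k * c k) * (e k i * x i) := by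
        refine Finset.sum_congr rfl fun i _ => ?_
        rw [Finset.mul_sum]
        exact Finset.sum_congr rfl fun k _ => by ring
    _ = ∑ k, ∑ i, (hA.eigenvalues k * c k) * (e k i * x i) := Finset.sum_comm
    _ = ∑ k, hA.eigenvalues k * c k ^ 2 := by
        refine Finset.sum_congr rfl fun k _ => ?_
        rw [← Finset.mul_sum]
        have : ∑ i, e k i * x i = c k := rfl
        rw [this]; ring

open Matrix in
lemma eigen_expand (n : ℕ) (A : Matrix (Fin n) (Fin n) ℝ) (hA : A.IsHermitian)
    (x : Fin n → ℝ) (i : Fin n) :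
    ∑ k, ((hA.eigenvectorBasis k : Fin n → ℝ) ⬝ᵥ x) * hA.eigenvectorBasis k i = x i := by
  have hrepr : ∀ k, hA.eigenvectorBasis.repr (WithLp.toLp 2 x : EuclideanSpace ℝ (Fin n)) k
      = (hA.eigenvectorBasis k : Fin n → ℝ) ⬝ᵥ x := by
    intro k
    rw [hA.eigenvectorBasis.repr_apply_apply]
    simp [PiLp.inner_apply, dotProduct, mul_comm]
  have h := congrArg (WithLp.linearEquiv 2 ℝ (Fin n → ℝ))
    (hA.eigenvectorBasis.sum_repr (WithLp.toLp 2 x : EuclideanSpace ℝ (Fin n)))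
  rw [map_sum] at h
  simp only [_root_.map_smul] at h
  have h2 := congrFun h i
  simpa [hrepr, Finset.sum_apply, WithLp.linearEquiv] using h2

/-- if `A` is real symmetric with positive entries and at most one
positive eigenvalue, and `v` is an entrywise positive eigenvector for the largest
eigenvalue `μ`, then `B i j = A i j / (v i * v j)` is conditionally negative
definite. -/
theorem perron_scaled_cond_neg_def (n : ℕ) (A : Matrix (Fin n) (Fin n) ℝ)
    (hA : A.IsHermitian) (hpos : ∀ i j, 0 < A i j)
    (hcount : (Finset.univ.filter fun i => 0 < hA.eigenvalues i).card ≤ 1)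
    (v : Fin n → ℝ) (hv : ∀ i, 0 < v i) (μ : ℝ)
    (hμmax : ∀ i, hA.eigenvalues i ≤ μ)
    (hμmem : ∃ i, hA.eigenvalues i = μ)
    (heig : A.mulVec v = μ • v) :
    ∀ z : Fin n → ℝ, (∑ i, z i) = 0 →
      ∑ i, ∑ j, z i * (A i j / (v i * v j)) * z j ≤ 0 := by
  open Matrix in
  intro z hz
  obtain ⟨k₀, hk₀⟩ := hμmem
  have hvne : ∀ i, v i ≠ 0 := fun i => (hv i).ne'
  set w : Fin n → ℝ := fun i => z i / v i with hw
  set e : Fin n → Fin n → ℝ := fun k => (hA.eigenvectorBasis k : Fin n → ℝ) with he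
  -- the sum equals w ⬝ᵥ (A *ᵥ w)
  have hterm : ∀ i j, z i * (A i j / (v i * v j)) * z j = w i * (A i j * w j) := by
    intro i j
    simp only [hw]
    field_simp
  have hsum : ∑ i, ∑ j, z i * (A i j / (v i * v j)) * z j = w ⬝ᵥ (A *ᵥ w) := by
    simp only [dotProduct, Matrix.mulVec, Finset.mul_sum, hterm]
  rw [hsum, quad_form_eigen n A hA w]
  -- symmetry of A as transpose
  have hAT : Aᵀ = A := hA.eq
  have hsym : ∀ u y : Fin n → ℝ, u ⬝ᵥ (A *ᵥ y) = (A *ᵥ u) ⬝ᵥ y := by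
    intro u y
    rw [Matrix.dotProduct_mulVec, ← Matrix.mulVec_transpose, hAT]
  -- μ is positive
  have hvv : 0 < v ⬝ᵥ v := by
    have : 0 < v k₀ * v k₀ := mul_pos (hv k₀) (hv k₀)
    exact Finset.sum_pos' (fun i _ => mul_self_nonneg _) ⟨k₀, Finset.mem_univ _, this⟩
  have hμpos : 0 < μ := by
    have h1 : 0 < v ⬝ᵥ (A *ᵥ v) := by
      refine Finset.sum_pos (fun i _ => mul_pos (hv i) ?_) ⟨k₀, Finset.mem_univ _⟩
      exact Finset.sum_pos (fun j _ => mul_pos (hpos i j) (hv j)) ⟨k₀, Finset.mem_univ _⟩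
    have h2 : v ⬝ᵥ (A *ᵥ v) = μ * (v ⬝ᵥ v) := by
      rw [heig]; simp [dotProduct, Finset.mul_sum, mul_assoc, mul_left_comm]
    nlinarith
  -- eigenvalues other than k₀ are nonpositive
  have hneg : ∀ k, k ≠ k₀ → hA.eigenvalues k ≤ 0 := by
    intro k hk
    by_contra h
    push_neg at h
    have hsub : ({k, k₀} : Finset (Fin n)) ⊆ Finset.univ.filter fun i => 0 < hA.eigenvalues i := by
      intro x hx
      simp only [Finset.mem_insert, Finset.mem_singleton] at hx
      rcases hx with rfl | rfl
      · exact Finset.mem_filter.2 ⟨Finset.mem_univ _, h⟩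
      · exact Finset.mem_filter.2 ⟨Finset.mem_univ _, hk₀ ▸ hμpos⟩
    have : ({k, k₀} : Finset (Fin n)).card = 2 := Finset.card_pair hk
    have := Finset.card_le_card hsub
    omega
  -- coefficients of v on other eigenvectors vanish
  have hd : ∀ k, k ≠ k₀ → e k ⬝ᵥ v = 0 := by
    intro k hk
    have h1 : e k ⬝ᵥ (A *ᵥ v) = μ * (e k ⬝ᵥ v) := by
      rw [heig]; simp [dotProduct, Finset.mul_sum, mul_assoc, mul_left_comm]
    have h2 : e k ⬝ᵥ (A *ᵥ v) = hA.eigenvalues k * (e k ⬝ᵥ v) := by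
      rw [hsym]
      have h3 : A *ᵥ e k = fun i => hA.eigenvalues k * e k i := by
        funext i
        exact congrFun (hA.mulVec_eigenvectorBasis k) i
      rw [h3]
      simp [dotProduct, Finset.mul_sum, mul_assoc]
    have hne : hA.eigenvalues k ≠ μ := by
      have := hneg k hk; linarith
    have : (hA.eigenvalues k - μ) * (e k ⬝ᵥ v) = 0 := by linarith [h1, h2]
    rcases mul_eq_zero.1 this with h | h
    · exact absurd (by linarith : hA.eigenvalues k = μ) hne
    · exact h
  -- k₀ coefficient of w vanishes
  have hvw : v ⬝ᵥ w = 0 := by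
    have : ∀ i, v i * w i = z i := fun i => by
      simp only [hw]
      rw [mul_comm, div_mul_eq_mul_div, mul_div_assoc, div_self (hvne i), mul_one]
    simp only [dotProduct, this, hz]
  have hvexp : ∀ i, ∑ k, (e k ⬝ᵥ v) * e k i = v i := fun i => eigen_expand n A hA v i
  have hdk₀ : e k₀ ⬝ᵥ v ≠ 0 := by
    intro h0
    have : v k₀ = 0 := by
      rw [← hvexp k₀]
      refine Finset.sum_eq_zero fun k _ => ?_
      by_cases hk : k = k₀
      · subst hk; rw [h0, zero_mul]
      · rw [hd k hk, zero_mul]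
    exact (hv k₀).ne' this
  have hwk₀ : e k₀ ⬝ᵥ w = 0 := by
    have hcalc : v ⬝ᵥ w = (e k₀ ⬝ᵥ v) * (e k₀ ⬝ᵥ w) := by
      calc v ⬝ᵥ w = ∑ i, v i * w i := rfl
        _ = ∑ i, (∑ k, (e k ⬝ᵥ v) * e k i) * w i :=
            Finset.sum_congr rfl fun i _ => by rw [hvexp i]
        _ = ∑ i, ∑ k, (e k ⬝ᵥ v) * (e k i * w i) := by
            refine Finset.sum_congr rfl fun i _ => ?_
            rw [Finset.sum_mul]
            exact Finset.sum_congr rfl fun k _ => by ring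
        _ = ∑ k, ∑ i, (e k ⬝ᵥ v) * (e k i * w i) := Finset.sum_comm
        _ = ∑ k, (e k ⬝ᵥ v) * (e k ⬝ᵥ w) := by
            refine Finset.sum_congr rfl fun k _ => ?_
            rw [← Finset.mul_sum]
            rfl
        _ = (e k₀ ⬝ᵥ v) * (e k₀ ⬝ᵥ w) :=
            Finset.sum_eq_single k₀ (fun k _ hk => by rw [hd k hk, zero_mul])
              (fun h => absurd (Finset.mem_univ k₀) h)
    have := hvw ▸ hcalc
    exact (mul_eq_zero.1 this.symm).resolve_left hdk₀
  -- conclude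
  refine Finset.sum_nonpos fun k _ => ?_
  by_cases hk : k = k₀
  · subst hk
    rw [show (hA.eigenvectorBasis k : Fin n → ℝ) ⬝ᵥ w = e k ⬝ᵥ w from rfl, hwk₀]
    simp
  · have h1 := hneg k hk
    have h2 : (0:ℝ) ≤ ((hA.eigenvectorBasis k : Fin n → ℝ) ⬝ᵥ w) ^ 2 := sq_nonneg _
    exact mul_nonpos_of_nonpos_of_nonneg h1 h2
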